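/- Let ℳ be a von Neumann algebra on a complex Hilbert space H and let (𝓘, ‖·‖_𝓘) be a symmetrically normed Banach ideal of ℳ with property (M) (the Minkowski integral inequality property). Then 𝓘 is integral symmetrically normed: for every measure space (Σ, ℋ, ρ) and weak* measurable A, B : Σ → ℳ with A(·)cB(·) weak* measurable for all c ∈ ℳ and ⨍_Σ ‖A‖‖B‖ dρ < ∞, one has ∫_Σ A(σ) r B(σ) ρ(dσ) ∈ 𝓘 and ‖∫_Σ A(σ) r B(σ) ρ(dσ)‖_𝓘 ≤ ‖r‖_𝓘 ⨍_Σ ‖A‖‖B‖ dρ for all r ∈ 𝓘. -/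

import Mathlib

open MeasureTheory ENNReal
open scoped InnerProductSpace

/-- The lower integral of a (possibly nonmeasurable) function `h : α → ℝ≥0∞`. -/
noncomputable def lowerIntegral {α : Type*} [MeasurableSpace α] (ρ : Measure α)
    (h : α → ℝ≥0∞) : ℝ≥0∞ :=
  ⨆ (g : α → ℝ≥0∞) (_ : Measurable g) (_ : ∀ᵐ x ∂ρ, g x ≤ h x), ∫⁻ x, g x ∂ρ

/-- `J` is the weak* integral of `F` with respect to `ρ`. -/
def IsWeakStarIntegral {H : Type*} [NormedAddCommGroup H] [InnerProductSpace ℂ H]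
    [CompleteSpace H] {α : Type*} [MeasurableSpace α] (ρ : Measure α)
    (F : α → H →L[ℂ] H) (J : H →L[ℂ] H) : Prop :=
  ∀ h k : ℕ → H, Summable (fun n => ‖h n‖ ^ 2) → Summable (fun n => ‖k n‖ ^ 2) →
    ∑' n, ⟪J (h n), k n⟫_ℂ = ∫ σ, (∑' n, ⟪F σ (h n), k n⟫_ℂ) ∂ρ


lemma lowerIntegral_le_mul {α : Type*} [MeasurableSpace α] (ρ : Measure α)
    (h h' : α → ℝ≥0∞) (c : ℝ≥0∞) (hc : c ≠ ∞) (hle : ∀ x, h x ≤ c * h' x) :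
    lowerIntegral ρ h ≤ c * lowerIntegral ρ h' := by
  refine iSup_le fun g => iSup_le fun hg => iSup_le fun hgh => ?_
  by_cases hc0 : c = 0
  · subst hc0
    have : ∫⁻ x, g x ∂ρ ≤ ∫⁻ x, (0 : ℝ≥0∞) ∂ρ := by
      refine lintegral_mono_ae ?_
      filter_upwards [hgh] with x hx
      exact hx.trans ((hle x).trans_eq (zero_mul _))
    simpa using this
  · have key : c⁻¹ * ∫⁻ x, g x ∂ρ ≤ lowerIntegral ρ h' := by
      rw [← lintegral_const_mul _ hg]
      refine le_iSup_of_le (fun x => c⁻¹ * g x) ?_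
      refine le_iSup_of_le (Measurable.const_mul hg _) ?_
      refine le_iSup_of_le ?_ le_rfl
      filter_upwards [hgh] with x hx
      calc c⁻¹ * g x ≤ c⁻¹ * (c * h' x) := by
            exact mul_le_mul_right (hx.trans (hle x)) _
        _ = (c⁻¹ * c) * h' x := by ring
        _ = h' x := by rw [ENNReal.inv_mul_cancel hc0 hc, one_mul]
    calc ∫⁻ x, g x ∂ρ = c * (c⁻¹ * ∫⁻ x, g x ∂ρ) := by
          rw [← mul_assoc, ENNReal.mul_inv_cancel hc0 hc, one_mul]
      _ ≤ c * lowerIntegral ρ h' := mul_le_mul_right key _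

/-- A symmetrically normed Banach ideal of a von Neumann algebra with property (M)
(the Minkowski integral inequality property) is integral symmetrically normed. -/
theorem stmt7 {H : Type*} [NormedAddCommGroup H] [InnerProductSpace ℂ H] [CompleteSpace H]
    (M : VonNeumannAlgebra H) (I : Set (H →L[ℂ] H)) (nI : (H →L[ℂ] H) → ℝ)
    -- `I` is a (two-sided, `M`-module) ideal of `M`
    (hIM : I ⊆ (M : Set (H →L[ℂ] H)))
    (hI0 : (0 : H →L[ℂ] H) ∈ I)
    (hIadd : ∀ r s : H →L[ℂ] H, r ∈ I → s ∈ I → r + s ∈ I)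
    (hIsmul : ∀ (z : ℂ) (r : H →L[ℂ] H), r ∈ I → z • r ∈ I)
    (hIdeal : ∀ a b r : H →L[ℂ] H, a ∈ M → b ∈ M → r ∈ I → a * r * b ∈ I)
    -- `nI` is a norm on `I`
    (hn_def : ∀ r ∈ I, (nI r = 0 ↔ r = 0))
    (hn_add : ∀ r s : H →L[ℂ] H, r ∈ I → s ∈ I → nI (r + s) ≤ nI r + nI s)
    (hn_smul : ∀ (z : ℂ) (r : H →L[ℂ] H), r ∈ I → nI (z • r) = ‖z‖ * nI r)
    -- the inclusion `(I, nI) ↪ (M, ‖·‖)` is bounded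
    (hn_bdd : ∃ C : ℝ, ∀ r ∈ I, ‖r‖ ≤ C * nI r)
    -- `(I, nI)` is complete
    (hcomplete : ∀ u : ℕ → (H →L[ℂ] H), (∀ n, u n ∈ I) →
      (∀ ε > (0 : ℝ), ∃ N, ∀ m ≥ N, ∀ n ≥ N, nI (u m - u n) < ε) →
      ∃ v ∈ I, ∀ ε > (0 : ℝ), ∃ N, ∀ n ≥ N, nI (u n - v) < ε)
    -- `I` is symmetrically normed
    (hsymm : ∀ a b r : H →L[ℂ] H, a ∈ M → b ∈ M → r ∈ I →
      nI (a * r * b) ≤ ‖a‖ * nI r * ‖b‖)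
    -- property (M): the Minkowski integral inequality property
    (hPropM : ∀ (Ω : Type) (_ : MeasurableSpace Ω) (ρ : Measure Ω)
      (F : Ω → H →L[ℂ] H), (∀ σ, F σ ∈ I) →
      (∀ h k : H, Measurable fun σ => ⟪F σ h, k⟫_ℂ) →
      lowerIntegral ρ (fun σ => ENNReal.ofReal (nI (F σ))) < ∞ →
      ∀ J : H →L[ℂ] H, IsWeakStarIntegral ρ F J →
        J ∈ I ∧ ENNReal.ofReal (nI J) ≤
          lowerIntegral ρ (fun σ => ENNReal.ofReal (nI (F σ)))) :
    -- conclusion: `I` is integral symmetrically normed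
    ∀ (Ω : Type) (_ : MeasurableSpace Ω) (ρ : Measure Ω) (A B : Ω → H →L[ℂ] H),
      (∀ σ, A σ ∈ M) → (∀ σ, B σ ∈ M) →
      (∀ h k : H, Measurable fun σ => ⟪A σ h, k⟫_ℂ) →
      (∀ h k : H, Measurable fun σ => ⟪B σ h, k⟫_ℂ) →
      (∀ c : H →L[ℂ] H, c ∈ M →
        ∀ h k : H, Measurable fun σ => ⟪(A σ * c * B σ) h, k⟫_ℂ) →
      lowerIntegral ρ (fun σ => (‖A σ‖₊ : ℝ≥0∞) * (‖B σ‖₊ : ℝ≥0∞)) < ∞ →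
      ∀ r ∈ I, ∀ J : H →L[ℂ] H, IsWeakStarIntegral ρ (fun σ => A σ * r * B σ) J →
        J ∈ I ∧ ENNReal.ofReal (nI J) ≤ ENNReal.ofReal (nI r) *
          lowerIntegral ρ (fun σ => (‖A σ‖₊ : ℝ≥0∞) * (‖B σ‖₊ : ℝ≥0∞)) := by

  intro Ω mΩ ρ A B hAM hBM hAmeas hBmeas hABmeas hfin r hr J hJ
  have hrM := hIM hr
  set F := fun σ => A σ * r * B σ with hF
  have hFI : ∀ σ, F σ ∈ I := fun σ => hIdeal _ _ _ (hAM σ) (hBM σ) hr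
  -- nonnegativity of nI r
  have hn0 : nI (0 : H →L[ℂ] H) = 0 := (hn_def 0 hI0).mpr rfl
  have hnr : 0 ≤ nI r := by
    have hneg : ((-1 : ℂ) • r) ∈ I := hIsmul _ _ hr
    have h1 : nI ((-1 : ℂ) • r) = nI r := by rw [hn_smul _ _ hr]; simp
    have h2 : r + (-1 : ℂ) • r = 0 := by simp
    have h3 := hn_add r ((-1 : ℂ) • r) hr hneg
    rw [h2, hn0, h1] at h3
    linarith
  have hle : ∀ σ, ENNReal.ofReal (nI (F σ)) ≤
      ENNReal.ofReal (nI r) * ((‖A σ‖₊ : ℝ≥0∞) * (‖B σ‖₊ : ℝ≥0∞)) := by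
    intro σ
    have h1 : nI (F σ) ≤ ‖A σ‖ * nI r * ‖B σ‖ := hsymm _ _ _ (hAM σ) (hBM σ) hr
    calc ENNReal.ofReal (nI (F σ)) ≤ ENNReal.ofReal (‖A σ‖ * nI r * ‖B σ‖) :=
          ENNReal.ofReal_le_ofReal h1
      _ = ENNReal.ofReal (nI r * (‖A σ‖ * ‖B σ‖)) := by ring_nf
      _ = ENNReal.ofReal (nI r) * ((‖A σ‖₊ : ℝ≥0∞) * (‖B σ‖₊ : ℝ≥0∞)) := by
          rw [ENNReal.ofReal_mul hnr, ENNReal.ofReal_mul (norm_nonneg _),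
            ofReal_norm, ofReal_norm, enorm_eq_nnnorm, enorm_eq_nnnorm]
  have hbound : lowerIntegral ρ (fun σ => ENNReal.ofReal (nI (F σ))) ≤
      ENNReal.ofReal (nI r) * lowerIntegral ρ (fun σ => (‖A σ‖₊ : ℝ≥0∞) * (‖B σ‖₊ : ℝ≥0∞)) :=
    lowerIntegral_le_mul ρ _ _ _ ENNReal.ofReal_ne_top hle
  have hfin' : lowerIntegral ρ (fun σ => ENNReal.ofReal (nI (F σ))) < ∞ :=
    lt_of_le_of_lt hbound (ENNReal.mul_lt_top ENNReal.ofReal_lt_top hfin)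
  obtain ⟨hJI, hJn⟩ := hPropM Ω mΩ ρ F hFI (hABmeas r hrM) hfin' J hJ
  exact ⟨hJI, hJn.trans hbound⟩
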